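/- Let n ≥ 3, r ≥ 1, and let T¹, …, Tʳ be symmetric n×n real matrices. Set a = ∑_{α=1}^r trace(T^α)² and b = ∑_{α=1}^r ‖T^α‖_F². Then equality holds in the inequality ∑_{α=1}^r ( T^α_{11}·trace(T^α) − ∑_{j=1}^n (T^α_{1j})² ) ≥ ((n−1)/n²)·( 2a − n·b − (n−2)·√a·√((n·b − a)/(n−1)) ) if and only if the following three conditions hold: (i) each T^α is a diagonal matrix whose diagonal entries in positions 2, …, n are all equal to a common value μ_α (write λ_α = T^α_{11}); (ii) for each α, (λ_α − μ_α)·(λ_α + (n−1)·μ_α) ≤ 0; (iii) the two vectors (|λ_α + (n−1)·μ_α|)_{α=1}^r and (|λ_α − μ_α|)_{α=1}^r in ℝʳ are linearly dependent. -/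

import Mathlib

/-- Cauchy–Schwarz anti-equality characterization. -/
lemma hineva_cs_eq_char {r : ℕ} (p q : Fin r → ℝ) :
    (∑ α, p α * q α = -(Real.sqrt (∑ α, p α ^ 2) * Real.sqrt (∑ α, q α ^ 2))) ↔
    ((∀ α, p α * q α ≤ 0) ∧ ∃ c d : ℝ, ¬(c = 0 ∧ d = 0) ∧ ∀ α, c * |p α| = d * |q α|) := by
  have hA : (0:ℝ) ≤ ∑ α, p α ^ 2 := Finset.sum_nonneg fun _ _ => sq_nonneg _
  have hB : (0:ℝ) ≤ ∑ α, q α ^ 2 := Finset.sum_nonneg fun _ _ => sq_nonneg _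
  have h1 : ∑ α, |p α * q α| = ∑ α, |p α| * |q α| :=
    Finset.sum_congr rfl fun α _ => abs_mul _ _
  have habs : ∑ α, |p α| * |q α| ≤ Real.sqrt (∑ α, p α ^ 2) * Real.sqrt (∑ α, q α ^ 2) := by
    have := Real.sum_mul_le_sqrt_mul_sqrt Finset.univ (fun α => |p α|) (fun α => |q α|)
    simpa [sq_abs] using this
  constructor
  · intro h
    -- each p α * q α ≤ 0
    have hsum0 : ∑ α, (|p α * q α| + p α * q α) = 0 := by
      have h2 : ∑ α, (|p α * q α| + p α * q α) = (∑ α, |p α * q α|) + ∑ α, p α * q α :=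
        Finset.sum_add_distrib
      have h4 : 0 ≤ ∑ α, (|p α * q α| + p α * q α) :=
        Finset.sum_nonneg fun α _ => by
          have := neg_abs_le (p α * q α); linarith
      linarith [h2, h1, habs, h]
    have hptw : ∀ α, p α * q α ≤ 0 := by
      intro α
      have := (Finset.sum_eq_zero_iff_of_nonneg (fun β _ => by
        have := neg_abs_le (p β * q β); linarith)).mp hsum0 α (Finset.mem_univ α)
      have h5 := abs_nonneg (p α * q α)
      have h6 := le_abs_self (p α * q α)
      nlinarith
    refine ⟨hptw, ?_⟩
    -- ∑ |p||q| attains equality in CS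
    have heq : ∑ α, |p α| * |q α| = Real.sqrt (∑ α, p α ^ 2) * Real.sqrt (∑ α, q α ^ 2) := by
      have h7 : ∑ α, |p α * q α| = -∑ α, p α * q α := by
        rw [← Finset.sum_neg_distrib]
        exact Finset.sum_congr rfl fun α _ => abs_of_nonpos (hptw α)
      rw [← h1, h7, h]; ring
    by_cases hq0 : ∑ α, q α ^ 2 = 0
    · refine ⟨0, 1, by simp, fun α => ?_⟩
      have : q α = 0 := by
        have := (Finset.sum_eq_zero_iff_of_nonneg (fun β _ => sq_nonneg (q β))).mp hq0 α
          (Finset.mem_univ α)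
        exact sq_eq_zero_iff.mp this
      simp [this]
    · have hBpos : 0 < ∑ α, q α ^ 2 := lt_of_le_of_ne hB (Ne.symm hq0)
      have hsB : 0 < Real.sqrt (∑ α, q α ^ 2) := Real.sqrt_pos.mpr hBpos
      set k : ℝ := Real.sqrt (∑ α, p α ^ 2) / Real.sqrt (∑ α, q α ^ 2) with hk
      have hzero : ∑ α, (|p α| - k * |q α|) ^ 2 = 0 := by
        have hexp : ∀ α, (|p α| - k * |q α|) ^ 2
            = p α ^ 2 - 2 * k * (|p α| * |q α|) + k ^ 2 * q α ^ 2 := by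
          intro α
          rw [← sq_abs (p α), ← sq_abs (q α)]; ring
        rw [Finset.sum_congr rfl fun α _ => hexp α]
        rw [Finset.sum_add_distrib, Finset.sum_sub_distrib, ← Finset.mul_sum, ← Finset.mul_sum, heq]
        have e1 : Real.sqrt (∑ α, p α ^ 2) ^ 2 = ∑ α, p α ^ 2 := Real.sq_sqrt hA
        have e2 : Real.sqrt (∑ α, q α ^ 2) ^ 2 = ∑ α, q α ^ 2 := Real.sq_sqrt hB
        field_simp [hk]
        have hkq : k * Real.sqrt (∑ α, q α ^ 2) = Real.sqrt (∑ α, p α ^ 2) := by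
          rw [hk]; exact div_mul_cancel₀ _ hsB.ne'
        linear_combination (-1) * e1 - k ^ 2 * e2
          + (k * Real.sqrt (∑ α, q α ^ 2) - Real.sqrt (∑ α, p α ^ 2)) * hkq
      refine ⟨1, k, by simp, fun α => ?_⟩
      have := (Finset.sum_eq_zero_iff_of_nonneg (fun β _ => sq_nonneg _)).mp hzero α
        (Finset.mem_univ α)
      have := sq_eq_zero_iff.mp this
      linarith [this]
  · rintro ⟨hptw, c, d, hcd, hlin⟩
    have h7 : ∑ α, p α * q α = -∑ α, |p α| * |q α| := by
      rw [← h1, ← Finset.sum_neg_distrib]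
      exact Finset.sum_congr rfl fun α _ => by
        have := abs_of_nonpos (hptw α); linarith
    have key : ∑ α, |p α| * |q α| = Real.sqrt (∑ α, p α ^ 2) * Real.sqrt (∑ α, q α ^ 2) := by
      have hsq : (∑ α, |p α| * |q α|) ^ 2 = (∑ α, p α ^ 2) * (∑ α, q α ^ 2) := by
        by_cases hc : c = 0
        · have hd : d ≠ 0 := fun h => hcd ⟨hc, h⟩
          have hq0 : ∀ α, q α = 0 := by
            intro α
            have := hlin α; rw [hc] at this
            have : d * |q α| = 0 := by linarith [this]
            have := (mul_eq_zero.mp this).resolve_left hd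
            exact abs_eq_zero.mp this
          simp [hq0]
        · have hp : ∀ α, |p α| = (d / c) * |q α| := by
            intro α
            have := hlin α
            field_simp
            linarith [this]
          have e1 : ∑ α, |p α| * |q α| = (d / c) * ∑ α, q α ^ 2 := by
            rw [Finset.mul_sum]
            refine Finset.sum_congr rfl fun α _ => ?_
            rw [hp α, ← sq_abs (q α)]; ring
          have e2 : ∑ α, p α ^ 2 = (d / c) ^ 2 * ∑ α, q α ^ 2 := by
            rw [Finset.mul_sum]
            refine Finset.sum_congr rfl fun α _ => ?_
            rw [← sq_abs (p α), hp α, ← sq_abs (q α)]; ring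
          rw [e1, e2]; ring
      have hnn : 0 ≤ ∑ α, |p α| * |q α| :=
        Finset.sum_nonneg fun α _ => mul_nonneg (abs_nonneg _) (abs_nonneg _)
      have : Real.sqrt ((∑ α, |p α| * |q α|) ^ 2) = Real.sqrt ((∑ α, p α ^ 2) * (∑ α, q α ^ 2)) := by
        rw [hsq]
      rwa [Real.sqrt_sq hnn, Real.sqrt_mul hA] at this
    rw [h7, key]

lemma hineva_sum_affine {r : ℕ} (c1 c2 c3 : ℝ) (f g h k : Fin r → ℝ) :
    ∑ α, (c1 * (f α + c2 * g α - c3 * h α) - k α)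
      = c1 * ((∑ α, f α) + c2 * (∑ α, g α) - c3 * (∑ α, h α)) - ∑ α, k α := by
  simp only [mul_sub, mul_add, Finset.sum_sub_distrib, Finset.sum_add_distrib, ← Finset.mul_sum]

theorem hineva_sum_equality_case (n r : ℕ) (hn : 3 ≤ n) (hr : 1 ≤ r)
    (T : Fin r → Fin n → Fin n → ℝ)
    (hT : ∀ α i j, T α i j = T α j i)
    (a b : ℝ)
    (ha : a = ∑ α, (∑ i, T α i i) ^ 2)
    (hb : b = ∑ α, ∑ i, ∑ j, (T α i j) ^ 2) :
    (∑ α, (T α ⟨0, by omega⟩ ⟨0, by omega⟩ * (∑ i, T α i i)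
        - ∑ j, (T α ⟨0, by omega⟩ j) ^ 2) =
      ((n : ℝ) - 1) / (n : ℝ) ^ 2 *
        (2 * a - (n : ℝ) * b -
          ((n : ℝ) - 2) * Real.sqrt a *
            Real.sqrt (((n : ℝ) * b - a) / ((n : ℝ) - 1)))) ↔
      ∃ μ : Fin r → ℝ,
        (∀ α, ∀ i j : Fin n, i ≠ j → T α i j = 0) ∧
        (∀ α, ∀ i : Fin n, i ≠ (⟨0, by omega⟩ : Fin n) → T α i i = μ α) ∧
        (∀ α, (T α ⟨0, by omega⟩ ⟨0, by omega⟩ - μ α) *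
            (T α ⟨0, by omega⟩ ⟨0, by omega⟩ + ((n : ℝ) - 1) * μ α) ≤ 0) ∧
        (∃ c d : ℝ, ¬(c = 0 ∧ d = 0) ∧
          ∀ α, c * |T α ⟨0, by omega⟩ ⟨0, by omega⟩ + ((n : ℝ) - 1) * μ α| =
            d * |T α ⟨0, by omega⟩ ⟨0, by omega⟩ - μ α|) := by
  have hn0 : 0 < n := by omega
  show (∑ α, (T α ⟨0, hn0⟩ ⟨0, hn0⟩ * (∑ i, T α i i)
        - ∑ j, (T α ⟨0, hn0⟩ j) ^ 2) =
      ((n : ℝ) - 1) / (n : ℝ) ^ 2 *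
        (2 * a - (n : ℝ) * b -
          ((n : ℝ) - 2) * Real.sqrt a *
            Real.sqrt (((n : ℝ) * b - a) / ((n : ℝ) - 1)))) ↔
      ∃ μ : Fin r → ℝ,
        (∀ α, ∀ i j : Fin n, i ≠ j → T α i j = 0) ∧
        (∀ α, ∀ i : Fin n, i ≠ (⟨0, hn0⟩ : Fin n) → T α i i = μ α) ∧
        (∀ α, (T α ⟨0, hn0⟩ ⟨0, hn0⟩ - μ α) *
            (T α ⟨0, hn0⟩ ⟨0, hn0⟩ + ((n : ℝ) - 1) * μ α) ≤ 0) ∧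
        (∃ c d : ℝ, ¬(c = 0 ∧ d = 0) ∧
          ∀ α, c * |T α ⟨0, hn0⟩ ⟨0, hn0⟩ + ((n : ℝ) - 1) * μ α| =
            d * |T α ⟨0, hn0⟩ ⟨0, hn0⟩ - μ α|)
  have hN3 : (3:ℝ) ≤ (n:ℝ) := by exact_mod_cast hn
  set N : ℝ := (n:ℝ) with hNdef
  have hN0 : (0:ℝ) < N := by linarith
  have hN1 : (0:ℝ) < N - 1 := by linarith
  have hN2 : (0:ℝ) < N - 2 := by linarith
  have hN0' : N ≠ 0 := ne_of_gt hN0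
  have hN1' : N - 1 ≠ 0 := ne_of_gt hN1
  clear_value N
  set z : Fin n := ⟨0, hn0⟩ with hzdef
  set e : Finset (Fin n) := Finset.univ.erase z with hedef
  have hmem : ∀ i : Fin n, i ∈ e ↔ i ≠ z := by
    intro i; rw [hedef]; simp [Finset.mem_erase]
  have hecard : (e.card : ℝ) = N - 1 := by
    rw [hedef, Finset.card_erase_of_mem (Finset.mem_univ z), Finset.card_univ, Fintype.card_fin,
      Nat.cast_sub (by omega)]
    rw [hNdef]; norm_num
  have hsplit : ∀ (f : Fin n → ℝ), ∑ i, f i = f z + ∑ i ∈ e, f i := by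
    intro f; rw [hedef]; exact (Finset.add_sum_erase _ f (Finset.mem_univ z)).symm
  clear_value z e
  clear hzdef hedef
  set L : Fin r → ℝ := fun α => T α z z with hL
  set t : Fin r → ℝ := fun α => ∑ i, T α i i with ht
  set m : Fin r → ℝ := fun α => (t α - L α) / (N - 1) with hm
  set q : Fin r → ℝ := fun α => L α - m α with hq
  set s : Fin r → ℝ := fun α => ∑ j ∈ e, (T α z j)^2 with hs
  set D : Fin r → ℝ := fun α => ∑ i ∈ e, (T α i i - m α)^2 with hD
  set W : Fin r → ℝ := fun α => ∑ i ∈ e, ∑ j ∈ e.erase i, (T α i j)^2 with hW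
  have hLval : ∀ α, L α = T α z z := fun α => by rw [hL]
  have htval : ∀ α, t α = ∑ i, T α i i := fun α => by rw [ht]
  have hqval : ∀ α, q α = L α - m α := fun α => by rw [hq]
  have hsval : ∀ α, s α = ∑ j ∈ e, (T α z j)^2 := fun α => by rw [hs]
  have hDval : ∀ α, D α = ∑ i ∈ e, (T α i i - m α)^2 := fun α => by rw [hD]
  have hWval : ∀ α, W α = ∑ i ∈ e, ∑ j ∈ e.erase i, (T α i j)^2 := fun α => by rw [hW]
  have htm : ∀ α, t α = L α + (N-1) * m α := by
    intro α; rw [hm]; field_simp; ring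
  clear_value L t m q s D W
  clear hL ht hm hq hs hD hW
  have hte : ∀ α, ∑ i ∈ e, T α i i = t α - L α := by
    intro α
    have h1 := hsplit (fun i => T α i i)
    rw [htval α, hLval α]
    linarith [h1]
  have hs0 : ∀ α, 0 ≤ s α := fun α => by
    rw [hsval α]; exact Finset.sum_nonneg fun j _ => sq_nonneg _
  have hD0 : ∀ α, 0 ≤ D α := fun α => by
    rw [hDval α]; exact Finset.sum_nonneg fun i _ => sq_nonneg _
  have hW0 : ∀ α, 0 ≤ W α := fun α => by
    rw [hWval α]; exact Finset.sum_nonneg fun i _ => Finset.sum_nonneg fun j _ => sq_nonneg _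
  set Ss : ℝ := ∑ α, s α with hSs
  set SD : ℝ := ∑ α, D α with hSD
  set SW : ℝ := ∑ α, W α with hSW
  set Bq : ℝ := ∑ α, q α ^ 2 with hBq
  set P : ℝ := ∑ α, t α * q α with hP
  clear_value Ss SD SW Bq P
  have hSs0 : 0 ≤ Ss := by rw [hSs]; exact Finset.sum_nonneg fun α _ => hs0 α
  have hSD0 : 0 ≤ SD := by rw [hSD]; exact Finset.sum_nonneg fun α _ => hD0 α
  have hSW0 : 0 ≤ SW := by rw [hSW]; exact Finset.sum_nonneg fun α _ => hW0 α
  have hBq0 : 0 ≤ Bq := by rw [hBq]; exact Finset.sum_nonneg fun α _ => sq_nonneg _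
  have haA : a = ∑ α, t α ^ 2 := by
    rw [ha]; exact Finset.sum_congr rfl fun α _ => by rw [htval α]
  have ha0 : 0 ≤ a := by rw [haA]; exact Finset.sum_nonneg fun α _ => sq_nonneg _
  -- Frobenius decomposition per α
  have hrow : ∀ α, ∑ j, (T α z j)^2 = L α^2 + s α := by
    intro α
    rw [hLval α, hsval α]
    exact hsplit (fun j => (T α z j)^2)
  have hBdec : ∀ α, ∑ i, ∑ j, (T α i j)^2
      = L α^2 + 2 * s α + (D α + (N-1) * m α^2) + W α := by
    intro α
    have e1 : ∑ i, ∑ j, (T α i j)^2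
        = (∑ j, (T α z j)^2) + ∑ i ∈ e, ∑ j, (T α i j)^2 :=
      hsplit (fun i => ∑ j, (T α i j)^2)
    have e3 : ∀ i ∈ e, ∑ j, (T α i j)^2
        = (T α i z)^2 + ((T α i i)^2 + ∑ j ∈ e.erase i, (T α i j)^2) := by
      intro i hi
      have h1 := hsplit (fun j => (T α i j)^2)
      have h2 : ∑ j ∈ e, (T α i j)^2 = (T α i i)^2 + ∑ j ∈ e.erase i, (T α i j)^2 :=
        (Finset.add_sum_erase e _ hi).symm
      rw [h1, h2]
    have e4 : ∑ i ∈ e, (T α i z)^2 = s α := by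
      rw [hsval α]
      exact Finset.sum_congr rfl fun i _ => by rw [hT α i z]
    have e5 : ∑ i ∈ e, (T α i i)^2 = D α + (N-1) * m α^2 := by
      have expand : ∑ i ∈ e, (T α i i - m α)^2
          = (∑ i ∈ e, (T α i i)^2) - 2 * m α * (∑ i ∈ e, T α i i) + e.card * m α^2 := by
        rw [Finset.sum_congr rfl (fun i _ => by ring :
          ∀ i ∈ e, (T α i i - m α)^2 = (T α i i)^2 - 2 * m α * T α i i + m α^2)]
        rw [Finset.sum_add_distrib, Finset.sum_sub_distrib, ← Finset.mul_sum,
          Finset.sum_const, nsmul_eq_mul]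
      rw [hDval α, expand, hte α, hecard]
      linear_combination (2 * m α) * htm α
    have e6 : ∑ i ∈ e, ∑ j, (T α i j)^2
        = s α + (D α + (N-1) * m α^2) + W α := by
      rw [Finset.sum_congr rfl e3, Finset.sum_add_distrib, Finset.sum_add_distrib, e4, e5,
        ← hWval α]
      ring
    rw [e1, hrow α, e6]; ring
  have hI1 : N * b - a = (N-1)*Bq + 2*N*Ss + N*SD + N*SW := by
    have perα : ∀ α, N * (∑ i, ∑ j, (T α i j)^2) - t α^2
        = (N-1)*q α^2 + 2*N*s α + N*D α + N*W α := by
      intro α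
      rw [hBdec α, htm α, hqval α]
      ring
    calc N * b - a = ∑ α, (N * (∑ i, ∑ j, (T α i j)^2) - t α^2) := by
          rw [hb, haA, Finset.mul_sum, ← Finset.sum_sub_distrib]
      _ = ∑ α, ((N-1)*q α^2 + 2*N*s α + N*D α + N*W α) :=
          Finset.sum_congr rfl fun α _ => perα α
      _ = (N-1)*Bq + 2*N*Ss + N*SD + N*SW := by
          rw [hBq, hSs, hSD, hSW]
          simp only [Finset.sum_add_distrib, ← Finset.mul_sum]
  set R : ℝ := Real.sqrt a with hR
  set Q : ℝ := Real.sqrt ((N*b - a)/(N-1)) with hQ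
  clear_value R Q
  have hR0 : 0 ≤ R := by rw [hR]; exact Real.sqrt_nonneg _
  have hQ0 : 0 ≤ Q := by rw [hQ]; exact Real.sqrt_nonneg _
  have harg0 : 0 ≤ (N*b - a)/(N-1) := by
    apply div_nonneg _ (le_of_lt hN1)
    linarith [hI1, mul_nonneg (le_of_lt hN1) hBq0, mul_nonneg (le_of_lt hN0) hSs0,
      mul_nonneg (le_of_lt hN0) hSD0, mul_nonneg (le_of_lt hN0) hSW0]
  have hQsq : Q^2 = (N*b - a)/(N-1) := by rw [hQ]; exact Real.sq_sqrt harg0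
  have hRsq : R^2 = a := by rw [hR]; exact Real.sq_sqrt ha0
  have hLHSsum : ∑ α, (T α z z * (∑ i, T α i i) - ∑ j, (T α z j)^2)
      = (N-1)/N^2 * (a + (N-2)*P - (N-1)*Bq) - Ss := by
    have perα : ∀ α, T α z z * (∑ i, T α i i) - ∑ j, (T α z j)^2
        = (N-1)/N^2 * (t α^2 + (N-2)*(t α * q α) - (N-1)*q α^2) - s α := by
      intro α
      rw [hrow α, ← hLval α, ← htval α, htm α, hqval α]
      field_simp
      ring
    rw [Finset.sum_congr rfl fun α _ => perα α, hineva_sum_affine, haA, hP, hBq, hSs]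
  set EE : ℝ := (N-1)*(N-2)*(P + R*Q) + N*(N-1)*SD + N*(N-1)*SW + N*(N-2)*Ss with hEE
  clear_value EE
  have hNb : N * b = a + (N-1)*Bq + 2*N*Ss + N*SD + N*SW := by linarith [hI1]
  have hdiff : (∑ α, (T α z z * (∑ i, T α i i) - ∑ j, (T α z j)^2))
      - (N-1)/N^2 * (2*a - N*b - (N-2)*R*Q) = EE / N^2 := by
    rw [hLHSsum, hNb, hEE]
    field_simp
    ring
  have hkey : (∑ α, (T α z z * (∑ i, T α i i) - ∑ j, (T α z j)^2)
      = (N-1)/N^2 * (2*a - N*b - (N-2)*R*Q)) ↔ EE = 0 := by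
    constructor
    · intro h
      have h2 := hdiff
      rw [h, sub_self] at h2
      have h3 := h2.symm
      rw [div_eq_zero_iff] at h3
      exact h3.resolve_right (pow_ne_zero _ hN0')
    · intro h0
      have h2 := hdiff
      rw [h0, zero_div] at h2
      linarith [h2]
  -- Cauchy–Schwarz lower bound
  have hBqQ : Real.sqrt Bq ≤ Q := by
    have hle : Bq ≤ Q^2 := by
      have h10 : Q^2 = Bq + (2*N*Ss + N*SD + N*SW)/(N-1) := by
        rw [hQsq, hI1]
        field_simp
        ring
      have h11 : 0 ≤ (2*N*Ss + N*SD + N*SW)/(N-1) := by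
        apply div_nonneg _ (le_of_lt hN1)
        linarith [mul_nonneg (le_of_lt hN0) hSs0, mul_nonneg (le_of_lt hN0) hSD0,
          mul_nonneg (le_of_lt hN0) hSW0]
      linarith
    calc Real.sqrt Bq ≤ Real.sqrt (Q^2) := Real.sqrt_le_sqrt hle
      _ = Q := Real.sqrt_sq hQ0
  have hcsP : -(R * Real.sqrt Bq) ≤ P := by
    have h8 := Real.sum_mul_le_sqrt_mul_sqrt Finset.univ t (fun α => -(q α))
    simp only [neg_sq] at h8
    have h9 : ∑ α, t α * (-(q α)) = -P := by
      rw [hP, ← Finset.sum_neg_distrib]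
      exact Finset.sum_congr rfl fun α _ => by ring
    rw [h9] at h8
    rw [hR, haA, hBq]
    linarith [h8]
  have hPQ0 : 0 ≤ P + R * Q := by
    linarith [hcsP, mul_nonneg hR0 (sub_nonneg.mpr hBqQ)]
  have hEEiff : EE = 0 ↔ (Ss = 0 ∧ SD = 0 ∧ SW = 0 ∧ P + R * Q = 0) := by
    constructor
    · intro h0
      rw [hEE] at h0
      have c1 : 0 ≤ (N-1)*(N-2)*(P+R*Q) :=
        mul_nonneg (mul_nonneg (le_of_lt hN1) (le_of_lt hN2)) hPQ0
      have c2 : 0 ≤ N*(N-1)*SD := mul_nonneg (mul_nonneg (le_of_lt hN0) (le_of_lt hN1)) hSD0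
      have c3 : 0 ≤ N*(N-1)*SW := mul_nonneg (mul_nonneg (le_of_lt hN0) (le_of_lt hN1)) hSW0
      have c4 : 0 ≤ N*(N-2)*Ss := mul_nonneg (mul_nonneg (le_of_lt hN0) (le_of_lt hN2)) hSs0
      have t1 : (N-1)*(N-2)*(P+R*Q) = 0 := by linarith
      have t2 : N*(N-1)*SD = 0 := by linarith
      have t3 : N*(N-1)*SW = 0 := by linarith
      have t4 : N*(N-2)*Ss = 0 := by linarith
      refine ⟨?_, ?_, ?_, ?_⟩
      · exact (mul_eq_zero.mp t4).resolve_left (ne_of_gt (mul_pos hN0 hN2))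
      · exact (mul_eq_zero.mp t2).resolve_left (ne_of_gt (mul_pos hN0 hN1))
      · exact (mul_eq_zero.mp t3).resolve_left (ne_of_gt (mul_pos hN0 hN1))
      · exact (mul_eq_zero.mp t1).resolve_left (ne_of_gt (mul_pos hN1 hN2))
    · rintro ⟨h1, h2, h3, h4⟩
      rw [hEE, h1, h2, h3, h4]
      ring
  rw [hkey, hEEiff]
  constructor
  · rintro ⟨h1, h2, h3, h4⟩
    have h1' : ∑ α, s α = 0 := by rw [← hSs]; exact h1
    have h2' : ∑ α, D α = 0 := by rw [← hSD]; exact h2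
    have h3' : ∑ α, W α = 0 := by rw [← hSW]; exact h3
    have hsz : ∀ α, s α = 0 := fun α =>
      (Finset.sum_eq_zero_iff_of_nonneg (fun β _ => hs0 β)).mp h1' α (Finset.mem_univ α)
    have hDz : ∀ α, D α = 0 := fun α =>
      (Finset.sum_eq_zero_iff_of_nonneg (fun β _ => hD0 β)).mp h2' α (Finset.mem_univ α)
    have hWz : ∀ α, W α = 0 := fun α =>
      (Finset.sum_eq_zero_iff_of_nonneg (fun β _ => hW0 β)).mp h3' α (Finset.mem_univ α)
    have hoff1 : ∀ α, ∀ j ∈ e, T α z j = 0 := by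
      intro α j hj
      have h5 : ∑ j ∈ e, (T α z j)^2 = 0 := by rw [← hsval α]; exact hsz α
      have h6 := (Finset.sum_eq_zero_iff_of_nonneg (fun j _ => sq_nonneg _)).mp h5 j hj
      exact sq_eq_zero_iff.mp h6
    have hoffW : ∀ α, ∀ i ∈ e, ∀ j ∈ e.erase i, T α i j = 0 := by
      intro α i hi j hj
      have h5 : ∑ i ∈ e, ∑ j ∈ e.erase i, (T α i j)^2 = 0 := by
        rw [← hWval α]; exact hWz α
      have h6 := (Finset.sum_eq_zero_iff_of_nonneg
        (fun i _ => Finset.sum_nonneg fun j _ => sq_nonneg _)).mp h5 i hi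
      have h7 := (Finset.sum_eq_zero_iff_of_nonneg (fun j _ => sq_nonneg _)).mp h6 j hj
      exact sq_eq_zero_iff.mp h7
    have hdiag : ∀ α, ∀ i ∈ e, T α i i = m α := by
      intro α i hi
      have h5 : ∑ i ∈ e, (T α i i - m α)^2 = 0 := by rw [← hDval α]; exact hDz α
      have h6 := (Finset.sum_eq_zero_iff_of_nonneg (fun i _ => sq_nonneg _)).mp h5 i hi
      have h7 := sq_eq_zero_iff.mp h6
      linarith [h7]
    have hQBq : Q = Real.sqrt Bq := by
      rw [hQ]
      congr 1
      rw [div_eq_iff hN1']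
      have hI1' := hI1
      rw [h1, h2, h3] at hI1'
      linarith [hI1']
    have hPeq : ∑ α, t α * q α
        = -(Real.sqrt (∑ α, t α^2) * Real.sqrt (∑ α, q α^2)) := by
      have h8 : P = -(R * Q) := by linarith [h4]
      calc ∑ α, t α * q α = P := hP.symm
        _ = -(R * Q) := h8
        _ = -(Real.sqrt (∑ α, t α^2) * Real.sqrt (∑ α, q α^2)) := by
            rw [hQBq, hBq, hR, haA]
    obtain ⟨hptw, c, d, hcd, hlin⟩ := (hineva_cs_eq_char t q).mp hPeq
    have e7 : ∀ α, T α z z - m α = q α := by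
      intro α; rw [hqval α, hLval α]
    have e8 : ∀ α, T α z z + (N-1) * m α = t α := by
      intro α; rw [htm α, hLval α]
    refine ⟨m, ?_, ?_, ?_, c, d, hcd, ?_⟩
    · intro α i j hij
      rcases eq_or_ne i z with hi | hi
      · rw [hi]
        exact hoff1 α j ((hmem j).mpr (fun hjz => hij (hi.trans hjz.symm)))
      · rcases eq_or_ne j z with hj | hj
        · rw [hj, hT α i z]
          exact hoff1 α i ((hmem i).mpr hi)
        · exact hoffW α i ((hmem i).mpr hi) j
            (Finset.mem_erase.mpr ⟨Ne.symm hij, (hmem j).mpr hj⟩)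
    · intro α i hi; exact hdiag α i ((hmem i).mpr hi)
    · intro α
      rw [e7 α, e8 α, mul_comm]
      exact hptw α
    · intro α
      rw [e8 α, e7 α]
      exact hlin α
  · rintro ⟨μ, hoff, hdiagμ, hii, c, d, hcd, hiii⟩
    have htμ : ∀ α, t α = T α z z + (N-1) * μ α := by
      intro α
      rw [htval α, hsplit (fun i => T α i i)]
      have h9 : ∑ i ∈ e, T α i i = (N-1) * μ α := by
        rw [Finset.sum_congr rfl (fun i hi => hdiagμ α i ((hmem i).mp hi)),
          Finset.sum_const, nsmul_eq_mul, hecard]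
      rw [h9]
    have hmμ : ∀ α, m α = μ α := by
      intro α
      have h9 : (N-1) * m α = (N-1) * μ α := by
        have := htm α
        have := htμ α
        have := hLval α
        linarith
      exact mul_left_cancel₀ hN1' h9
    have hsz : ∀ α, s α = 0 := by
      intro α; rw [hsval α]
      exact Finset.sum_eq_zero fun j hj => by
        rw [hoff α z j (Ne.symm ((hmem j).mp hj))]; ring
    have hDz : ∀ α, D α = 0 := by
      intro α; rw [hDval α]
      exact Finset.sum_eq_zero fun i hi => by
        rw [hdiagμ α i ((hmem i).mp hi), hmμ α]; ring
    have hWz : ∀ α, W α = 0 := by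
      intro α; rw [hWval α]
      exact Finset.sum_eq_zero fun i hi => Finset.sum_eq_zero fun j hj => by
        rw [hoff α i j (Ne.symm (Finset.mem_erase.mp hj).1)]; ring
    have h1 : Ss = 0 := by rw [hSs]; exact Finset.sum_eq_zero fun α _ => hsz α
    have h2 : SD = 0 := by rw [hSD]; exact Finset.sum_eq_zero fun α _ => hDz α
    have h3 : SW = 0 := by rw [hSW]; exact Finset.sum_eq_zero fun α _ => hWz α
    refine ⟨h1, h2, h3, ?_⟩
    have hQBq : Q = Real.sqrt Bq := by
      rw [hQ]
      congr 1
      rw [div_eq_iff hN1']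
      have hI1' := hI1
      rw [h1, h2, h3] at hI1'
      linarith [hI1']
    have hptw : ∀ α, t α * q α ≤ 0 := by
      intro α
      have e7 : q α = T α z z - μ α := by rw [hqval α, hLval α, hmμ α]
      rw [e7, htμ α, mul_comm]
      exact hii α
    have hlin : ∀ α, c * |t α| = d * |q α| := by
      intro α
      have e7 : q α = T α z z - μ α := by rw [hqval α, hLval α, hmμ α]
      rw [htμ α, e7]
      exact hiii α
    have hPeq := (hineva_cs_eq_char t q).mpr ⟨hptw, c, d, hcd, hlin⟩
    have h8 : P = -(R * Q) := by
      rw [hP, hR, haA, hQBq, hBq]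
      exact hPeq
    linarith
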